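/- (Total-variation performance-difference bound.) Suppose 0 ≤ r(s,a) ≤ R_max for all s ∈ S and a ∈ A. Then for any two policies π₁ and π₂ and any initial distribution μ, |J(π₁) − J(π₂)| ≤ (R_max/(1−γ)²) · E_{s ~ ν^{π₁,μ}}[ ‖π₁(s) − π₂(s)‖₁ ]. -/

import Mathlib

open scoped BigOperators

section MDPDefs

variable {S A : Type*} [Fintype S] [Fintype A]

/-- Expectation of a real-valued function under a PMF on a finite type (a finite sum). -/
noncomputable def pmfExp {X : Type*} [Fintype X] (p : PMF X) (f : X → ℝ) : ℝ :=
  ∑ x, (p x).toReal * f x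

/-- Time-`t` state distribution `d_t^{π,μ}`:
`d_0 = μ` and `d_{t+1}` is obtained by sampling `x ~ d_t`, `a ~ π x`, `s' ~ P x a`. -/
noncomputable def stateDist (P : S → A → PMF S) (π : S → PMF A) (μ : PMF S) : ℕ → PMF S
  | 0 => μ
  | t + 1 => (stateDist P π μ t).bind fun x => (π x).bind fun a => P x a

/-- State value function `V^π(s) = Σ_t γ^t E_{x ~ d_t^{π, δ_s}} E_{a ~ π x}[r x a]`. -/
noncomputable def Vval (P : S → A → PMF S) (r : S → A → ℝ) (γ : ℝ) (π : S → PMF A) (s : S) : ℝ :=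
  ∑' t : ℕ, γ ^ t * pmfExp (stateDist P π (PMF.pure s) t) fun x => pmfExp (π x) fun a => r x a

/-- Return from an initial distribution: `J(π) = E_{s~μ}[V^π(s)]`. -/
noncomputable def Jret (P : S → A → PMF S) (r : S → A → ℝ) (γ : ℝ) (π : S → PMF A) (μ : PMF S) : ℝ :=
  pmfExp μ (Vval P r γ π)

/-- State-action value `Q^π(s,a) = r(s,a) + γ E_{s' ~ P s a}[V^π(s')]`. -/
noncomputable def Qval (P : S → A → PMF S) (r : S → A → ℝ) (γ : ℝ) (π : S → PMF A)
    (s : S) (a : A) : ℝ :=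
  r s a + γ * pmfExp (P s a) (Vval P r γ π)

/-- Advantage `A^π(s,a) = Q^π(s,a) - V^π(s)`. -/
noncomputable def Adv (P : S → A → PMF S) (r : S → A → ℝ) (γ : ℝ) (π : S → PMF A)
    (s : S) (a : A) : ℝ :=
  Qval P r γ π s a - Vval P r γ π s

/-- Discounted state-visitation distribution `ν^{π,μ}(s) = (1-γ) Σ_t γ^t d_t^{π,μ}(s)`. -/
noncomputable def visit (P : S → A → PMF S) (π : S → PMF A) (μ : PMF S) (γ : ℝ) (s : S) : ℝ :=
  (1 - γ) * ∑' t : ℕ, γ ^ t * (stateDist P π μ t s).toReal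

/-- `ℓ¹` distance between two PMFs on a finite type. -/
noncomputable def l1Dist {X : Type*} [Fintype X] (p q : PMF X) : ℝ :=
  ∑ x, |(p x).toReal - (q x).toReal|

/-- KL divergence `D_KL(p‖q) = Σ_{x : p x > 0} p x * log (p x / q x)` on a finite type. -/
noncomputable def pmfKL {X : Type*} [Fintype X] (p q : PMF X) : ℝ :=
  ∑ x, if p x = 0 then 0 else (p x).toReal * Real.log ((p x).toReal / (q x).toReal)

/-- Mixed behavior policy: teacher's action when the intervention indicator is on,
student's action otherwise. -/
noncomputable def mixPolicy {S A : Type*} (πt πs : S → PMF A) (T : S → Bool) (s : S) : PMF A :=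
  if T s then πt s else πs s

/-- Finite-horizon value of a deterministic policy, defined recursively:
`V_0(s) = r s (σ s)` and `V_{k+1}(s) = r s (σ s) + γ E_{s' ~ P s (σ s)}[V_k s']`. -/
noncomputable def Vfin (P : S → A → PMF S) (r : S → A → ℝ) (γ : ℝ) (σ : S → A) : ℕ → S → ℝ
  | 0, s => r s (σ s)
  | k + 1, s => r s (σ s) + γ * pmfExp (P s (σ s)) (Vfin P r γ σ k)

/-- Finite-horizon value of the switching (mixed) policy that at each step picks whichever of
the two deterministic policies gives the larger continuation value. -/
noncomputable def Wswitch (P : S → A → PMF S) (r : S → A → ℝ) (γ : ℝ)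
    (πt πs : S → A) : ℕ → S → ℝ
  | 0, s => max (r s (πt s)) (r s (πs s))
  | k + 1, s =>
      max (r s (πt s) + γ * pmfExp (P s (πt s)) (Wswitch P r γ πt πs k))
          (r s (πs s) + γ * pmfExp (P s (πs s)) (Wswitch P r γ πt πs k))

end MDPDefs

section TVPDHelpers

lemma pmf_sum_toReal {X : Type*} [Fintype X] (p : PMF X) : ∑ x, (p x).toReal = 1 := by
  rw [← ENNReal.toReal_sum (fun x _ => (p.apply_ne_top x))]
  rw [← tsum_fintype (L := SummationFilter.unconditional _), p.tsum_coe]; simp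

lemma pmfExp_const {X : Type*} [Fintype X] (p : PMF X) (c : ℝ) :
    pmfExp p (fun _ => c) = c := by
  simp [pmfExp, ← Finset.sum_mul, pmf_sum_toReal]

lemma pmfExp_mono {X : Type*} [Fintype X] (p : PMF X) {f g : X → ℝ} (h : ∀ x, f x ≤ g x) :
    pmfExp p f ≤ pmfExp p g :=
  Finset.sum_le_sum fun x _ => mul_le_mul_of_nonneg_left (h x) ENNReal.toReal_nonneg

lemma abs_pmfExp_le_pmfExp_abs {X : Type*} [Fintype X] (p : PMF X) (f : X → ℝ) :
    |pmfExp p f| ≤ pmfExp p (fun x => |f x|) := by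
  refine (Finset.abs_sum_le_sum_abs _ _).trans ?_
  refine Finset.sum_le_sum fun x _ => ?_
  rw [abs_mul, abs_of_nonneg (ENNReal.toReal_nonneg)]

lemma abs_pmfExp_le {X : Type*} [Fintype X] (p : PMF X) {f : X → ℝ} {C : ℝ}
    (h : ∀ x, |f x| ≤ C) : |pmfExp p f| ≤ C :=
  (abs_pmfExp_le_pmfExp_abs p f).trans
    (by calc pmfExp p (fun x => |f x|) ≤ pmfExp p (fun _ => C) := pmfExp_mono p h
          _ = C := pmfExp_const p C)

lemma pmfExp_const_mul {X : Type*} [Fintype X] (p : PMF X) (c : ℝ) (f : X → ℝ) :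
    pmfExp p (fun x => c * f x) = c * pmfExp p f := by
  unfold pmfExp; rw [Finset.mul_sum]; exact Finset.sum_congr rfl fun x _ => by ring

lemma pmfExp_sub {X : Type*} [Fintype X] (p : PMF X) (f g : X → ℝ) :
    pmfExp p f - pmfExp p g = pmfExp p (fun x => f x - g x) := by
  unfold pmfExp; rw [← Finset.sum_sub_distrib]
  exact Finset.sum_congr rfl fun x _ => by ring

lemma pmfExp_bind {X Y : Type*} [Fintype X] [Fintype Y] (p : PMF X) (g : X → PMF Y) (f : Y → ℝ) :
    pmfExp (p.bind g) f = pmfExp p (fun x => pmfExp (g x) f) := by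
  unfold pmfExp
  simp only [PMF.bind_apply, tsum_fintype, Finset.mul_sum]
  rw [Finset.sum_comm]
  refine Finset.sum_congr rfl fun y _ => ?_
  rw [ENNReal.toReal_sum (fun x _ => ENNReal.mul_ne_top (p.apply_ne_top x) ((g x).apply_ne_top y)),
    Finset.sum_mul]
  refine Finset.sum_congr rfl fun x _ => ?_
  rw [ENNReal.toReal_mul]; ring

lemma pmfExp_tsum_swap {S : Type*} [Fintype S] (μ : PMF S) (h : S → ℕ → ℝ)
    (hs : ∀ s, Summable (h s)) :
    pmfExp μ (fun s => ∑' t, h s t) = ∑' t, pmfExp μ (fun s => h s t) := by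
  unfold pmfExp
  simp only
  calc ∑ x : S, (μ x).toReal * ∑' t, h x t
      = ∑ x : S, ∑' t, (μ x).toReal * h x t := by
        exact Finset.sum_congr rfl fun s _ => (tsum_mul_left).symm
    _ = ∑' t, ∑ x : S, (μ x).toReal * h x t :=
        (Summable.tsum_finsetSum (fun s _ => ((hs s).mul_left _))).symm

lemma summable_geom_bdd {γ : ℝ} (hγ0 : 0 ≤ γ) (hγ1 : γ < 1) {c : ℕ → ℝ} {C : ℝ}
    (h : ∀ t, |c t| ≤ C) : Summable (fun t => γ ^ t * c t) := by
  refine Summable.of_norm ?_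
  refine Summable.of_nonneg_of_le (fun t => norm_nonneg _) (fun t => ?_)
    ((summable_geometric_of_lt_one hγ0 hγ1).mul_right C)
  rw [norm_mul, norm_pow, Real.norm_eq_abs, abs_of_nonneg hγ0, Real.norm_eq_abs]
  exact mul_le_mul_of_nonneg_left (h t) (pow_nonneg hγ0 t)

lemma stateDist_bind' {S A : Type*} [Fintype S] [Fintype A] (P : S → A → PMF S)
    (π : S → PMF A) (μ : PMF S) (t : ℕ) :
    stateDist P π μ t = μ.bind (fun s => stateDist P π (PMF.pure s) t) := by
  induction t with
  | zero => simp [stateDist]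
  | succ t ih => rw [stateDist, ih, PMF.bind_bind]; rfl

lemma l1_contraction {S X : Type*} [Fintype S] [Fintype X] (a b : X → ℝ) (M N : X → S → ℝ)
    (ha : ∀ x, 0 ≤ a x) (hN : ∀ x s', 0 ≤ N x s') (hNrow : ∀ x, ∑ s', N x s' = 1)
    (e : X → ℝ) (hMN : ∀ x, ∑ s', |M x s' - N x s'| ≤ e x) :
    ∑ s', |∑ x, a x * M x s' - ∑ x, b x * N x s'| ≤
      ∑ x, a x * e x + ∑ x, |a x - b x| := by
  have step : ∀ s', |∑ x, a x * M x s' - ∑ x, b x * N x s'| ≤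
      (∑ x, a x * |M x s' - N x s'|) + ∑ x, |a x - b x| * N x s' := by
    intro s'
    have : ∑ x, a x * M x s' - ∑ x, b x * N x s' =
        ∑ x, (a x * (M x s' - N x s') + (a x - b x) * N x s') := by
      rw [← Finset.sum_sub_distrib]
      exact Finset.sum_congr rfl fun x _ => by ring
    rw [this]
    refine (Finset.abs_sum_le_sum_abs _ _).trans ?_
    rw [← Finset.sum_add_distrib]
    refine Finset.sum_le_sum fun x _ => ?_
    refine (abs_add_le _ _).trans ?_
    gcongr
    · rw [abs_mul, abs_of_nonneg (ha x)]
    · rw [abs_mul, abs_of_nonneg (hN x s')]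
  calc ∑ s', |∑ x, a x * M x s' - ∑ x, b x * N x s'|
      ≤ ∑ s', ((∑ x, a x * |M x s' - N x s'|) + ∑ x, |a x - b x| * N x s') :=
        Finset.sum_le_sum fun s' _ => step s'
    _ = (∑ x, a x * ∑ s', |M x s' - N x s'|) + ∑ x, |a x - b x| * ∑ s', N x s' := by
        simp only [Finset.mul_sum]
        rw [Finset.sum_add_distrib]
        congr 1 <;> exact Finset.sum_comm
    _ ≤ ∑ x, a x * e x + ∑ x, |a x - b x| := by
        gcongr with x _ x
        · exact ha x
        · exact hMN x
        · rw [hNrow x, mul_one]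

lemma pmf_bind_toReal {X Y : Type*} [Fintype X] (p : PMF X) (g : X → PMF Y) (y : Y) :
    ((p.bind g) y).toReal = ∑ x, (p x).toReal * ((g x) y).toReal := by
  rw [PMF.bind_apply, tsum_fintype,
    ENNReal.toReal_sum (fun x _ => ENNReal.mul_ne_top (p.apply_ne_top x) ((g x).apply_ne_top y))]
  exact Finset.sum_congr rfl fun x _ => ENNReal.toReal_mul

lemma pmfExp_sub_pmfExp_abs_le {X : Type*} [Fintype X] (p q : PMF X) (g : X → ℝ) (C : ℝ)
    (hg : ∀ x, |g x| ≤ C) :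
    |pmfExp p g - pmfExp q g| ≤ C * ∑ x, |(p x).toReal - (q x).toReal| := by
  unfold pmfExp
  rw [← Finset.sum_sub_distrib, Finset.mul_sum]
  refine (Finset.abs_sum_le_sum_abs _ _).trans (Finset.sum_le_sum fun x _ => ?_)
  rw [← sub_mul, abs_mul, mul_comm]
  exact mul_le_mul_of_nonneg_right (hg x) (abs_nonneg _)

lemma l1Dist_nonneg' {X : Type*} [Fintype X] (p q : PMF X) : 0 ≤ l1Dist p q :=
  Finset.sum_nonneg fun _ _ => abs_nonneg _

lemma l1Dist_le_two' {X : Type*} [Fintype X] (p q : PMF X) : l1Dist p q ≤ 2 := by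
  unfold l1Dist
  calc ∑ x, |(p x).toReal - (q x).toReal| ≤ ∑ x, ((p x).toReal + (q x).toReal) :=
        Finset.sum_le_sum fun x _ => (abs_sub ((p x).toReal) ((q x).toReal)).trans
          (by simp [abs_of_nonneg ENNReal.toReal_nonneg])
    _ = 2 := by rw [Finset.sum_add_distrib, pmf_sum_toReal, pmf_sum_toReal]; norm_num

lemma delta_step {S A : Type*} [Fintype S] [Fintype A] (P : S → A → PMF S)
    (π₁ π₂ : S → PMF A) (p q : PMF S) :
    ∑ s', |((p.bind fun x => (π₁ x).bind fun a => P x a) s').toReal -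
           ((q.bind fun x => (π₂ x).bind fun a => P x a) s').toReal| ≤
      pmfExp p (fun x => l1Dist (π₁ x) (π₂ x)) + ∑ x, |(p x).toReal - (q x).toReal| := by
  unfold pmfExp
  simp only [pmf_bind_toReal (g := fun x => (π₁ x).bind fun a => P x a),
    pmf_bind_toReal (g := fun x => (π₂ x).bind fun a => P x a)]
  refine l1_contraction (fun x => (p x).toReal) (fun x => (q x).toReal)
    (fun x s' => (((π₁ x).bind fun a => P x a) s').toReal)
    (fun x s' => (((π₂ x).bind fun a => P x a) s').toReal)
    (fun x => ENNReal.toReal_nonneg) (fun x s' => ENNReal.toReal_nonneg)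
    (fun x => pmf_sum_toReal _) _ (fun x => ?_)
  simp only [pmf_bind_toReal]
  calc ∑ s', |∑ a, ((π₁ x) a).toReal * ((P x a) s').toReal -
        ∑ a, ((π₂ x) a).toReal * ((P x a) s').toReal|
      ≤ ∑ s', ∑ a, |((π₁ x) a).toReal - ((π₂ x) a).toReal| * ((P x a) s').toReal := by
        refine Finset.sum_le_sum fun s' _ => ?_
        rw [← Finset.sum_sub_distrib]
        refine (Finset.abs_sum_le_sum_abs _ _).trans (Finset.sum_le_sum fun a _ => ?_)
        rw [← sub_mul, abs_mul, abs_of_nonneg (ENNReal.toReal_nonneg)]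
    _ = ∑ a, |((π₁ x) a).toReal - ((π₂ x) a).toReal| * ∑ s', ((P x a) s').toReal := by
        rw [Finset.sum_comm]; simp [Finset.mul_sum]
    _ = l1Dist (π₁ x) (π₂ x) := by
        simp only [pmf_sum_toReal, mul_one]; rfl

lemma Jret_eq {S A : Type*} [Fintype S] [Fintype A] (P : S → A → PMF S) (r : S → A → ℝ)
    {γ : ℝ} (hγ0 : 0 ≤ γ) (hγ1 : γ < 1) (π : S → PMF A) (μ : PMF S) {C : ℝ}
    (hC : ∀ x, |pmfExp (π x) (fun a => r x a)| ≤ C) :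
    Jret P r γ π μ =
      ∑' t, γ ^ t * pmfExp (stateDist P π μ t) (fun x => pmfExp (π x) fun a => r x a) := by
  unfold Jret Vval
  rw [pmfExp_tsum_swap μ
    (fun s t => γ ^ t * pmfExp (stateDist P π (PMF.pure s) t) fun x => pmfExp (π x) fun a => r x a)
    (fun s => summable_geom_bdd hγ0 hγ1 (fun t => abs_pmfExp_le _ hC))]
  refine tsum_congr fun t => ?_
  rw [pmfExp_const_mul, stateDist_bind' P π μ t, pmfExp_bind]

end TVPDHelpers


/-- Total-variation performance-difference bound: if `0 ≤ r ≤ R_max`, then for any two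
policies `π₁, π₂` and any initial distribution `μ`,
`|J(π₁) − J(π₂)| ≤ (R_max/(1−γ)²) E_{s ~ ν^{π₁,μ}}[‖π₁(s) − π₂(s)‖₁]`. -/
theorem tv_perf_diff_bound {S A : Type*} [Fintype S] [Nonempty S] [Fintype A] [Nonempty A]
    (P : S → A → PMF S) (r : S → A → ℝ) (γ : ℝ) (hγ0 : 0 ≤ γ) (hγ1 : γ < 1)
    (Rmax : ℝ) (hr : ∀ (s : S) (a : A), 0 ≤ r s a ∧ r s a ≤ Rmax)
    (π₁ π₂ : S → PMF A) (μ : PMF S) :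
    |Jret P r γ π₁ μ - Jret P r γ π₂ μ| ≤
      Rmax / (1 - γ) ^ 2 *
        ∑ s, visit P π₁ μ γ s * l1Dist (π₁ s) (π₂ s) := by
  obtain ⟨a0⟩ := (inferInstance : Nonempty A)
  obtain ⟨s0⟩ := (inferInstance : Nonempty S)
  have hRmax : 0 ≤ Rmax := le_trans (hr s0 a0).1 (hr s0 a0).2
  have hγ' : 0 < 1 - γ := by linarith
  have habs_r : ∀ (s : S) (a : A), |r s a| ≤ Rmax := fun s a =>
    abs_le.2 ⟨by linarith [(hr s a).1], (hr s a).2⟩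
  set F₁ : S → ℝ := fun x => pmfExp (π₁ x) (fun a => r x a) with hF₁def
  set F₂ : S → ℝ := fun x => pmfExp (π₂ x) (fun a => r x a) with hF₂def
  have hF₁ : ∀ x, |F₁ x| ≤ Rmax := fun x => abs_pmfExp_le _ (habs_r x)
  have hF₂ : ∀ x, |F₂ x| ≤ Rmax := fun x => abs_pmfExp_le _ (habs_r x)
  set d₁ : ℕ → PMF S := fun t => stateDist P π₁ μ t with hd₁def
  set d₂ : ℕ → PMF S := fun t => stateDist P π₂ μ t with hd₂def
  set ε : ℕ → ℝ := fun t => pmfExp (d₁ t) (fun x => l1Dist (π₁ x) (π₂ x)) with hεdef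
  set δ : ℕ → ℝ := fun t => ∑ x, |(d₁ t x).toReal - (d₂ t x).toReal| with hδdef
  have hε0 : ∀ t, 0 ≤ ε t := fun t =>
    Finset.sum_nonneg fun x _ => mul_nonneg ENNReal.toReal_nonneg (l1Dist_nonneg' _ _)
  have hεabs : ∀ t, |ε t| ≤ 2 := fun t =>
    abs_pmfExp_le _ (fun x => abs_le.2 ⟨by linarith [l1Dist_nonneg' (π₁ x) (π₂ x)],
      l1Dist_le_two' _ _⟩)
  have hδ0 : δ 0 = 0 := by
    simp [hδdef, hd₁def, hd₂def, stateDist]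
  have hδnn : ∀ t, 0 ≤ δ t := fun t => Finset.sum_nonneg fun x _ => abs_nonneg _
  have hδabs : ∀ t, |δ t| ≤ 2 := fun t =>
    abs_le.2 ⟨by linarith [hδnn t], l1Dist_le_two' (d₁ t) (d₂ t)⟩
  have hδrec : ∀ t, δ (t + 1) ≤ ε t + δ t := by
    intro t
    have h1 : d₁ (t + 1) = (d₁ t).bind fun x => (π₁ x).bind fun a => P x a := rfl
    have h2 : d₂ (t + 1) = (d₂ t).bind fun x => (π₂ x).bind fun a => P x a := rfl
    calc δ (t + 1) = ∑ x, |(d₁ (t+1) x).toReal - (d₂ (t+1) x).toReal| := rfl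
      _ ≤ ε t + δ t := by rw [h1, h2]; exact delta_step P π₁ π₂ (d₁ t) (d₂ t)
  have SE : Summable (fun t => γ ^ t * ε t) := summable_geom_bdd hγ0 hγ1 hεabs
  have SD : Summable (fun t => γ ^ t * δ t) := summable_geom_bdd hγ0 hγ1 hδabs
  set E : ℝ := ∑' t, γ ^ t * ε t with hEdef
  set D : ℝ := ∑' t, γ ^ t * δ t with hDdef
  have hE0 : 0 ≤ E := tsum_nonneg fun t => mul_nonneg (pow_nonneg hγ0 t) (hε0 t)
  have hJ₁ : Jret P r γ π₁ μ = ∑' t, γ ^ t * pmfExp (d₁ t) F₁ :=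
    Jret_eq P r hγ0 hγ1 π₁ μ hF₁
  have hJ₂ : Jret P r γ π₂ μ = ∑' t, γ ^ t * pmfExp (d₂ t) F₂ :=
    Jret_eq P r hγ0 hγ1 π₂ μ hF₂
  have S₁ : Summable (fun t => γ ^ t * pmfExp (d₁ t) F₁) :=
    summable_geom_bdd hγ0 hγ1 (fun t => abs_pmfExp_le _ hF₁)
  have S₂ : Summable (fun t => γ ^ t * pmfExp (d₂ t) F₂) :=
    summable_geom_bdd hγ0 hγ1 (fun t => abs_pmfExp_le _ hF₂)
  have key : ∀ t, |pmfExp (d₁ t) F₁ - pmfExp (d₂ t) F₂| ≤ Rmax * (ε t + δ t) := by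
    intro t
    have h1 : |pmfExp (d₁ t) F₁ - pmfExp (d₁ t) F₂| ≤ Rmax * ε t := by
      rw [pmfExp_sub]
      have hb : ∀ x, |F₁ x - F₂ x| ≤ Rmax * l1Dist (π₁ x) (π₂ x) := fun x =>
        pmfExp_sub_pmfExp_abs_le (π₁ x) (π₂ x) _ Rmax (habs_r x)
      calc |pmfExp (d₁ t) (fun x => F₁ x - F₂ x)|
          ≤ pmfExp (d₁ t) (fun x => |F₁ x - F₂ x|) := abs_pmfExp_le_pmfExp_abs _ _
        _ ≤ pmfExp (d₁ t) (fun x => Rmax * l1Dist (π₁ x) (π₂ x)) := pmfExp_mono _ hb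
        _ = Rmax * ε t := pmfExp_const_mul _ _ _
    have h2 : |pmfExp (d₁ t) F₂ - pmfExp (d₂ t) F₂| ≤ Rmax * δ t :=
      pmfExp_sub_pmfExp_abs_le (d₁ t) (d₂ t) F₂ Rmax hF₂
    calc |pmfExp (d₁ t) F₁ - pmfExp (d₂ t) F₂|
        ≤ |pmfExp (d₁ t) F₁ - pmfExp (d₁ t) F₂| + |pmfExp (d₁ t) F₂ - pmfExp (d₂ t) F₂| :=
          abs_sub_le _ _ _
      _ ≤ Rmax * ε t + Rmax * δ t := add_le_add h1 h2
      _ = Rmax * (ε t + δ t) := by ring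
  have Sg : Summable (fun t => γ ^ t * (Rmax * (ε t + δ t))) := by
    refine (summable_congr (fun t => ?_)).mpr (((SE.add SD).mul_left Rmax))
    show γ ^ t * (Rmax * (ε t + δ t)) = Rmax * (γ ^ t * ε t + γ ^ t * δ t); ring
  have habsJ : |Jret P r γ π₁ μ - Jret P r γ π₂ μ| ≤ ∑' t, γ ^ t * (Rmax * (ε t + δ t)) := by
    rw [hJ₁, hJ₂, ← S₁.tsum_sub S₂]
    have hb : ∀ t, ‖γ ^ t * pmfExp (d₁ t) F₁ - γ ^ t * pmfExp (d₂ t) F₂‖ ≤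
        γ ^ t * (Rmax * (ε t + δ t)) := by
      intro t
      rw [Real.norm_eq_abs, ← mul_sub, abs_mul, abs_of_nonneg (pow_nonneg hγ0 t)]
      exact mul_le_mul_of_nonneg_left (key t) (pow_nonneg hγ0 t)
    have hsn : Summable (fun t => ‖γ ^ t * pmfExp (d₁ t) F₁ - γ ^ t * pmfExp (d₂ t) F₂‖) :=
      Summable.of_nonneg_of_le (fun t => norm_nonneg _) hb Sg
    calc |∑' t, (γ ^ t * pmfExp (d₁ t) F₁ - γ ^ t * pmfExp (d₂ t) F₂)|
        ≤ ∑' t, ‖γ ^ t * pmfExp (d₁ t) F₁ - γ ^ t * pmfExp (d₂ t) F₂‖ := by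
          rw [← Real.norm_eq_abs]; exact norm_tsum_le_tsum_norm hsn
      _ ≤ ∑' t, γ ^ t * (Rmax * (ε t + δ t)) := Summable.tsum_le_tsum hb hsn Sg
  have hsum_eq : ∑' t, γ ^ t * (Rmax * (ε t + δ t)) = Rmax * (E + D) := by
    calc ∑' t, γ ^ t * (Rmax * (ε t + δ t))
        = ∑' t, (Rmax * (γ ^ t * ε t) + Rmax * (γ ^ t * δ t)) :=
          tsum_congr fun t => by ring
      _ = Rmax * E + Rmax * D := by
          rw [(SE.mul_left Rmax).tsum_add (SD.mul_left Rmax), tsum_mul_left, tsum_mul_left]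
      _ = Rmax * (E + D) := by ring
  have hDbound : (1 - γ) * D ≤ γ * E := by
    have hshift : D = ∑' t, γ ^ (t + 1) * δ (t + 1) := by
      have h0 := SD.tsum_eq_zero_add
      rw [hDdef, h0, hδ0]
      simp
    have SDs : Summable (fun t => γ ^ (t + 1) * δ (t + 1)) :=
      (summable_nat_add_iff (f := fun t => γ ^ t * δ t) 1).mpr SD
    have hle : ∑' t, γ ^ (t + 1) * δ (t + 1) ≤ ∑' t, γ * (γ ^ t * δ t + γ ^ t * ε t) := by
      refine Summable.tsum_le_tsum (fun t => ?_) SDs ((SD.add SE).mul_left γ)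
      have hp : (0:ℝ) ≤ γ ^ (t + 1) := pow_nonneg hγ0 _
      calc γ ^ (t + 1) * δ (t + 1) ≤ γ ^ (t + 1) * (ε t + δ t) :=
            mul_le_mul_of_nonneg_left (hδrec t) hp
        _ = γ * (γ ^ t * δ t + γ ^ t * ε t) := by ring
    have heq : ∑' t, γ * (γ ^ t * δ t + γ ^ t * ε t) = γ * (D + E) := by
      rw [tsum_mul_left, SD.tsum_add SE]
    have : D ≤ γ * (D + E) := by
      calc D = ∑' t, γ ^ (t + 1) * δ (t + 1) := hshift
        _ ≤ ∑' t, γ * (γ ^ t * δ t + γ ^ t * ε t) := hle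
        _ = γ * (D + E) := heq
    nlinarith
  have hD : D ≤ γ / (1 - γ) * E := by
    rw [div_mul_eq_mul_div, le_div_iff₀ hγ']
    nlinarith
  have hRHS : ∑ s, visit P π₁ μ γ s * l1Dist (π₁ s) (π₂ s) = (1 - γ) * E := by
    unfold visit
    have hdle : ∀ (t : ℕ) (s : S), |(d₁ t s).toReal * l1Dist (π₁ s) (π₂ s)| ≤ 2 := by
      intro t s
      have h1 : (d₁ t s).toReal ≤ 1 := by
        calc (d₁ t s).toReal ≤ ∑ x, (d₁ t x).toReal :=
              Finset.single_le_sum (fun x _ => ENNReal.toReal_nonneg) (Finset.mem_univ s)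
          _ = 1 := pmf_sum_toReal _
      rw [abs_mul, abs_of_nonneg ENNReal.toReal_nonneg,
        abs_of_nonneg (l1Dist_nonneg' _ _)]
      calc (d₁ t s).toReal * l1Dist (π₁ s) (π₂ s) ≤ 1 * 2 :=
            mul_le_mul h1 (l1Dist_le_two' _ _) (l1Dist_nonneg' _ _) one_pos.le
        _ = 2 := by norm_num
    have hsum_s : ∀ s : S, ((1 - γ) * ∑' t, γ ^ t * (d₁ t s).toReal) * l1Dist (π₁ s) (π₂ s)
        = (1 - γ) * ∑' t, γ ^ t * ((d₁ t s).toReal * l1Dist (π₁ s) (π₂ s)) := by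
      intro s
      rw [mul_assoc, ← tsum_mul_right]
      exact congrArg _ (tsum_congr fun t => by ring)
    calc ∑ s, ((1 - γ) * ∑' t, γ ^ t * (stateDist P π₁ μ t s).toReal) * l1Dist (π₁ s) (π₂ s)
        = ∑ s, (1 - γ) * ∑' t, γ ^ t * ((d₁ t s).toReal * l1Dist (π₁ s) (π₂ s)) :=
          Finset.sum_congr rfl fun s _ => hsum_s s
      _ = (1 - γ) * ∑ s, ∑' t, γ ^ t * ((d₁ t s).toReal * l1Dist (π₁ s) (π₂ s)) := by
          rw [Finset.mul_sum]
      _ = (1 - γ) * ∑' t, ∑ s, γ ^ t * ((d₁ t s).toReal * l1Dist (π₁ s) (π₂ s)) := by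
          rw [Summable.tsum_finsetSum (fun s _ => summable_geom_bdd hγ0 hγ1 (hdle · s))]
      _ = (1 - γ) * E := by
          rw [hEdef]
          congr 1
          refine tsum_congr fun t => ?_
          rw [← Finset.mul_sum]
          rfl
  rw [hRHS]
  have hfinal : Rmax / (1 - γ) ^ 2 * ((1 - γ) * E) = Rmax / (1 - γ) * E := by
    field_simp
  rw [hfinal]
  calc |Jret P r γ π₁ μ - Jret P r γ π₂ μ| ≤ Rmax * (E + D) := habsJ.trans_eq hsum_eq
    _ ≤ Rmax * (E + γ / (1 - γ) * E) :=
        mul_le_mul_of_nonneg_left (by linarith) hRmax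
    _ = Rmax / (1 - γ) * E := by
        have h1γ : (1 : ℝ) - γ ≠ 0 := ne_of_gt hγ'
        field_simp
        ring_nf
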